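/- For the Gaussian AR(1) kernel 𝒬 with |a| < 1 and σ > 0 as above, and for every differentiable f : ℝ → ℝ with f and f' bounded, one has for all n ≥ 0 and x ∈ ℝ: |𝒬ⁿf(x) − ∫ f dμ| ≤ ‖f'‖_∞ (σ(1 − a)^{-1} + |x|) aⁿ, where μ = N(0, σ²/(1 − a²)) and a ∈ (0,1). -/

import Mathlib

open Real MeasureTheory Filter Set

noncomputable def gpdf (m V x : ℝ) : ℝ :=
  (Real.sqrt (2 * π * V))⁻¹ * Real.exp (-(x - m) ^ 2 / (2 * V))

lemma gpdf_eq (m : ℝ) {V : ℝ} (hV : 0 ≤ V) :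
    gpdf m V = ProbabilityTheory.gaussianPDFReal m V.toNNReal := by
  ext x
  simp [gpdf, ProbabilityTheory.gaussianPDFReal, Real.coe_toNNReal V hV]

lemma gpdf_nonneg (m V x : ℝ) : 0 ≤ gpdf m V x := by
  unfold gpdf; positivity

lemma integrable_gpdf (m : ℝ) {V : ℝ} (hV : 0 ≤ V) : Integrable (gpdf m V) := by
  rw [gpdf_eq m hV]; exact ProbabilityTheory.integrable_gaussianPDFReal m V.toNNReal

lemma integral_gpdf (m : ℝ) {V : ℝ} (hV : 0 < V) : ∫ x, gpdf m V x = 1 := by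
  rw [gpdf_eq m hV.le]
  exact ProbabilityTheory.integral_gaussianPDFReal_eq_one m
    (by simp [Real.toNNReal_eq_zero, not_le, hV])

lemma continuous_gpdf (m V : ℝ) : Continuous (gpdf m V) := by
  unfold gpdf; fun_prop

lemma continuous_gpdf2 (c W : ℝ) : Continuous fun p : ℝ × ℝ => gpdf (c * p.1) W p.2 := by
  unfold gpdf; fun_prop

lemma gpdf_mul_gpdf (c m z : ℝ) {V W : ℝ} (hV : 0 < V) (hW : 0 < W) (y : ℝ) :
    gpdf m V y * gpdf (c * y) W z
      = gpdf ((m * W + c * z * V) / (c ^ 2 * V + W)) (V * W / (c ^ 2 * V + W)) y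
        * gpdf (c * m) (c ^ 2 * V + W) z := by
  have hT : 0 < c ^ 2 * V + W := by positivity
  unfold gpdf
  have hc1 : Real.sqrt (2 * π * V) * Real.sqrt (2 * π * W)
      = Real.sqrt (2 * π * (V * W / (c ^ 2 * V + W))) * Real.sqrt (2 * π * (c ^ 2 * V + W)) := by
    rw [← Real.sqrt_mul (by positivity), ← Real.sqrt_mul (by positivity)]
    congr 1
    field_simp
  have hc2 : -(y - m) ^ 2 / (2 * V) + -(z - c * y) ^ 2 / (2 * W)
      = -(y - (m * W + c * z * V) / (c ^ 2 * V + W)) ^ 2 / (2 * (V * W / (c ^ 2 * V + W)))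
        + -(z - c * m) ^ 2 / (2 * (c ^ 2 * V + W)) := by
    field_simp
    ring
  rw [mul_mul_mul_comm, ← Real.exp_add, mul_mul_mul_comm, ← Real.exp_add, ← mul_inv, ← mul_inv,
    hc1, hc2]

lemma CK (c m z : ℝ) {V W : ℝ} (hV : 0 < V) (hW : 0 < W) :
    ∫ y, gpdf m V y * gpdf (c * y) W z = gpdf (c * m) (c ^ 2 * V + W) z := by
  have hT : 0 < c ^ 2 * V + W := by positivity
  have hS : 0 < V * W / (c ^ 2 * V + W) := by positivity
  calc ∫ y, gpdf m V y * gpdf (c * y) W z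
      = ∫ y, gpdf ((m * W + c * z * V) / (c ^ 2 * V + W)) (V * W / (c ^ 2 * V + W)) y
          * gpdf (c * m) (c ^ 2 * V + W) z :=
        integral_congr_ae (Filter.Eventually.of_forall fun y => gpdf_mul_gpdf c m z hV hW y)
    _ = (∫ y, gpdf ((m * W + c * z * V) / (c ^ 2 * V + W)) (V * W / (c ^ 2 * V + W)) y)
          * gpdf (c * m) (c ^ 2 * V + W) z := integral_mul_const _ _
    _ = gpdf (c * m) (c ^ 2 * V + W) z := by rw [integral_gpdf _ hS, one_mul]

lemma standardize (g : ℝ → ℝ) (m : ℝ) {V : ℝ} (hV : 0 < V) :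
    ∫ z, g z * gpdf m V z = ∫ u, g (m + Real.sqrt V * u) * gpdf 0 1 u := by
  have hs : (0:ℝ) < Real.sqrt V := Real.sqrt_pos.2 hV
  have h1 : ∫ z, g z * gpdf m V z = ∫ z, g (m + z) * gpdf m V (m + z) :=
    (integral_add_left_eq_self (μ := volume) (fun z => g z * gpdf m V z) m).symm
  rw [h1]
  have h2 : ∫ z, g (m + z) * gpdf m V (m + z)
      = |(Real.sqrt V)⁻¹|⁻¹ • ∫ u, g (m + Real.sqrt V * u) * gpdf m V (m + Real.sqrt V * u) := by
    rw [Measure.integral_comp_mul_left (fun z => g (m + z) * gpdf m V (m + z)) (Real.sqrt V)]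
    rw [smul_smul, abs_of_pos (inv_pos.2 hs), inv_inv, mul_inv_cancel₀ hs.ne', one_smul]
  rw [h2, abs_of_pos (inv_pos.2 hs), inv_inv]
  rw [← integral_smul]
  congr 1; ext u
  have key : gpdf m V (m + Real.sqrt V * u) = (Real.sqrt V)⁻¹ * gpdf 0 1 u := by
    unfold gpdf
    have hVs : Real.sqrt V ^ 2 = V := Real.sq_sqrt hV.le
    rw [show (2 * π * V) = (2 * π * 1) * (Real.sqrt V)^2 by rw [hVs]; ring,
      Real.sqrt_mul (by positivity), Real.sqrt_sq hs.le, mul_inv]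
    have he : -(m + Real.sqrt V * u - m) ^ 2 / (2 * V) = -(u - 0) ^ 2 / (2 * 1) := by
      field_simp
      rw [show m + Real.sqrt V * u - m = Real.sqrt V * u by ring, mul_pow, hVs]; ring
    rw [he]; ring
  rw [key, smul_eq_mul]; field_simp

lemma integral_Ioi_id_exp : ∫ x in Set.Ioi (0:ℝ), x * Real.exp (-x ^ 2 / 2) = 1 := by
  have hform : ∀ x : ℝ, -x ^ 2 / 2 = -(1/2) * x ^ 2 := fun x => by ring
  have hD : ∀ x : ℝ, HasDerivAt (fun t => -Real.exp (-t ^ 2 / 2)) (x * Real.exp (-x ^ 2 / 2)) x := by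
    intro x
    have h1 : HasDerivAt (fun t : ℝ => -t ^ 2 / 2) (-x) x := by
      have h := (hasDerivAt_pow 2 x).neg.div_const 2
      exact h.congr_deriv (by ring)
    have h2 := h1.exp.neg
    exact h2.congr_deriv (by ring)
  have hint : IntegrableOn (fun x : ℝ => x * Real.exp (-x ^ 2 / 2)) (Set.Ioi 0) := by
    have h := integrable_mul_exp_neg_mul_sq (b := 1/2) (by norm_num)
    simp_rw [← hform] at h
    exact h.integrableOn
  have htend : Tendsto (fun t : ℝ => -Real.exp (-t ^ 2 / 2)) atTop (nhds 0) := by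
    rw [show (0:ℝ) = -0 by ring]
    refine Tendsto.neg ?_
    apply Real.tendsto_exp_atBot.comp
    have h3 : Tendsto (fun t : ℝ => t ^ 2 / 2) atTop atTop :=
      (tendsto_pow_atTop two_ne_zero).atTop_div_const (by norm_num)
    have h4 := tendsto_neg_atTop_atBot.comp h3
    convert h4 using 2 with t
    simp [Function.comp]
    ring
  have h := integral_Ioi_of_hasDerivAt_of_tendsto
    (f := fun t => -Real.exp (-t ^ 2 / 2)) (f' := fun x => x * Real.exp (-x ^ 2 / 2))
    (a := 0) (m := 0) ((hD 0).continuousAt.continuousWithinAt)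
    (fun x _ => hD x) hint htend
  rw [h]; simp

lemma absmom_le_one : ∫ u, |u| * gpdf 0 1 u ≤ 1 := by
  have h1 : ∫ u, |u| * gpdf 0 1 u = (Real.sqrt (2 * π))⁻¹ * ∫ u, |u| * Real.exp (-u ^ 2 / 2) := by
    rw [← integral_const_mul]
    congr 1; ext u
    unfold gpdf
    rw [mul_one, sub_zero, mul_one]
    ring
  have h2 : ∫ u, |u| * Real.exp (-u ^ 2 / 2) = 2 := by
    have hc : ∀ u : ℝ, |u| * Real.exp (-u ^ 2 / 2) = |u| * Real.exp (-|u| ^ 2 / 2) := by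
      intro u; rw [sq_abs]
    simp_rw [hc]
    rw [integral_comp_abs (f := fun t => t * Real.exp (-t ^ 2 / 2)), integral_Ioi_id_exp]
    norm_num
  rw [h1, h2]
  rw [inv_mul_le_iff₀ (by positivity), mul_one]
  rw [Real.le_sqrt' (by norm_num)]
  nlinarith [Real.two_le_pi]

lemma integrable_abs_gpdf : Integrable fun u : ℝ => |u| * gpdf 0 1 u := by
  have h := (integrable_mul_exp_neg_mul_sq (b := 1/2) (by norm_num)).abs.const_mul
    (Real.sqrt (2 * π * 1))⁻¹
  apply h.congr
  filter_upwards with u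
  unfold gpdf
  rw [abs_mul, abs_of_pos (Real.exp_pos _)]
  rw [show -(1/2 : ℝ) * u ^ 2 = -(u - 0) ^ 2 / (2 * 1) by ring]
  ring

lemma bdd_mul_gpdf_integrable (g : ℝ → ℝ) (hg : Continuous g) (C : ℝ) (hgb : ∀ x, |g x| ≤ C)
    (m : ℝ) {V : ℝ} (hV : 0 ≤ V) : Integrable fun z => g z * gpdf m V z :=
  (integrable_gpdf m hV).bdd_mul hg.aestronglyMeasurable
    (Filter.Eventually.of_forall fun x => by rw [Real.norm_eq_abs]; exact hgb x)

set_option maxHeartbeats 1000000 in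
lemma fubini_step (f : ℝ → ℝ) (hfc : Continuous f) (Cf : ℝ) (hfbd : ∀ x, |f x| ≤ Cf)
    (c m : ℝ) {V W : ℝ} (hV : 0 < V) (hW : 0 < W) :
    ∫ y, (∫ z, f z * gpdf (c * y) W z) * gpdf m V y
      = ∫ z, f z * gpdf (c * m) (c ^ 2 * V + W) z := by
  have hCf0 : 0 ≤ Cf := le_trans (abs_nonneg _) (hfbd 0)
  have hGc : Continuous (fun p : ℝ × ℝ => f p.2 * gpdf (c * p.1) W p.2 * gpdf m V p.1) := by
    apply Continuous.mul
    · exact (hfc.comp continuous_snd).mul (continuous_gpdf2 c W)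
    · exact (continuous_gpdf m V).comp continuous_fst
  have hbd : ∀ y : ℝ, (∫ z, ‖f z * gpdf (c * y) W z * gpdf m V y‖) ≤ Cf * gpdf m V y := by
    intro y
    have hb : ∫ z, ‖f z * gpdf (c * y) W z * gpdf m V y‖
        ≤ ∫ z, Cf * gpdf (c * y) W z * gpdf m V y := by
      apply integral_mono
      · exact ((bdd_mul_gpdf_integrable f hfc Cf hfbd (c * y) hW.le).mul_const (gpdf m V y)).norm
      · exact ((integrable_gpdf (c * y) hW.le).const_mul Cf).mul_const _
      · intro z
        simp only [Real.norm_eq_abs, abs_mul, abs_of_nonneg (gpdf_nonneg _ _ _)]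
        have h0 := hfbd z
        have h1 := gpdf_nonneg (c * y) W z
        have h2 := gpdf_nonneg m V y
        exact mul_le_mul_of_nonneg_right (mul_le_mul_of_nonneg_right h0 h1) h2
    refine hb.trans ?_
    have heq : ∫ z, Cf * gpdf (c * y) W z * gpdf m V y
        = Cf * gpdf m V y * ∫ z, gpdf (c * y) W z := by
      rw [← integral_const_mul]
      congr 1; ext z; ring
    rw [heq, integral_gpdf _ hW, mul_one]
  have hInt : Integrable (fun p : ℝ × ℝ => f p.2 * gpdf (c * p.1) W p.2 * gpdf m V p.1)
      (volume.prod volume) := by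
    rw [integrable_prod_iff hGc.aestronglyMeasurable]
    constructor
    · filter_upwards with y
      exact (bdd_mul_gpdf_integrable f hfc Cf hfbd _ hW.le).mul_const _
    · apply Integrable.mono' ((integrable_gpdf m hV.le).const_mul Cf)
      · exact (hGc.norm.stronglyMeasurable.integral_prod_right').aestronglyMeasurable
      · filter_upwards with y
        have hnn : (0:ℝ) ≤ ∫ z, ‖f z * gpdf (c * y) W z * gpdf m V y‖ :=
          integral_nonneg fun z => norm_nonneg _
        rw [Real.norm_eq_abs, abs_of_nonneg hnn]
        exact hbd y
  calc ∫ y, (∫ z, f z * gpdf (c * y) W z) * gpdf m V y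
      = ∫ y, ∫ z, f z * gpdf (c * y) W z * gpdf m V y := by
        congr 1; ext y
        rw [← integral_mul_const]
    _ = ∫ z, ∫ y, f z * gpdf (c * y) W z * gpdf m V y :=
        integral_integral_swap hInt
    _ = ∫ z, f z * ∫ y, gpdf m V y * gpdf (c * y) W z := by
        congr 1; ext z
        rw [← integral_const_mul]
        congr 1; ext y
        ring
    _ = ∫ z, f z * gpdf (c * m) (c ^ 2 * V + W) z := by
        congr 1; ext z
        rw [CK c m z hV hW]

/-- Geometric ergodicity bound for the Gaussian AR(1) kernel: for `f` differentiable with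
`f` and `f'` bounded, `|𝒬ⁿ f(x) − ⟨μ, f⟩| ≤ ‖f'‖_∞ (σ(1−a)⁻¹ + |x|) aⁿ`. -/
theorem gaussian_AR1_geom_erg (a σ : ℝ) (ha : a ∈ Set.Ioo (0 : ℝ) 1) (hσ : 0 < σ)
    (q : ℝ → ℝ → ℝ) (muD : ℝ → ℝ) (σa : ℝ)
    (hσa : σa = σ / Real.sqrt (1 - a ^ 2))
    (hq : ∀ x y, q x y = (Real.sqrt (2 * π * σ ^ 2))⁻¹ * Real.exp (-(y - a * x) ^ 2 / (2 * σ ^ 2)))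
    (hmu : ∀ x, muD x = (Real.sqrt (2 * π * σa ^ 2))⁻¹ * Real.exp (-x ^ 2 / (2 * σa ^ 2)))
    (Q : (ℝ → ℝ) → (ℝ → ℝ)) (hQ : ∀ g x, Q g x = ∫ y, g y * q x y)
    (f f' : ℝ → ℝ) (hderiv : ∀ x, HasDerivAt f (f' x) x)
    (Cf C' : ℝ) (hfbd : ∀ x, |f x| ≤ Cf) (hf'bd : ∀ x, |f' x| ≤ C') :
    ∀ (n : ℕ) (x : ℝ),
      |(Q^[n] f) x - ∫ y, f y * muD y| ≤ C' * (σ * (1 - a)⁻¹ + |x|) * a ^ n := by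
  obtain ⟨ha0, ha1⟩ := ha
  have hfc : Continuous f := by
    rw [continuous_iff_continuousAt]; exact fun x => (hderiv x).continuousAt
  have hC' : 0 ≤ C' := le_trans (abs_nonneg _) (hf'bd 0)
  have ha2 : 0 < 1 - a ^ 2 := by nlinarith
  have hσ2 : 0 < σ ^ 2 := by positivity
  have hσa0 : 0 < σa := by rw [hσa]; positivity
  have hσa2 : σa ^ 2 = σ ^ 2 / (1 - a ^ 2) := by
    rw [hσa, div_pow, Real.sq_sqrt ha2.le]
  have hσale : σa ≤ σ * (1 - a)⁻¹ := by
    rw [hσa, div_eq_mul_inv]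
    apply mul_le_mul_of_nonneg_left _ hσ.le
    apply inv_anti₀ (by linarith)
    rw [show (1 : ℝ) - a = Real.sqrt ((1-a)^2) by rw [Real.sqrt_sq (by linarith)]]
    apply Real.sqrt_le_sqrt
    nlinarith
  -- pdf identifications
  have hq' : ∀ x y, q x y = gpdf (a * x) (σ ^ 2) y := fun x y => hq x y
  have hmu' : ∀ y, muD y = gpdf 0 (σa ^ 2) y := by
    intro y; rw [hmu]; unfold gpdf; rw [sub_zero]
  -- the variance sequence
  set w : ℕ → ℝ := fun n => σ ^ 2 * (1 - a ^ (2 * n)) / (1 - a ^ 2) with hw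
  have hw1 : w 1 = σ ^ 2 := by
    simp only [hw, mul_one]
    field_simp
  have hwpos : ∀ n : ℕ, 1 ≤ n → 0 < w n := by
    intro n hn
    have : a ^ (2 * n) < 1 := pow_lt_one₀ ha0.le ha1 (by omega)
    have : 0 < 1 - a ^ (2 * n) := by linarith
    rw [hw]; positivity
  have hwrec : ∀ n : ℕ, (a ^ n) ^ 2 * σ ^ 2 + w n = w (n + 1) := by
    intro n
    simp only [hw]
    rw [show 2 * (n + 1) = 2 * n + 2 by ring, pow_add, ← pow_mul, mul_comm n 2]
    field_simp
    ring
  have hwval : ∀ n : ℕ, w n = σa ^ 2 * (1 - a ^ (2 * n)) := by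
    intro n; rw [hσa2, hw]; ring
  -- representation
  have rep : ∀ n : ℕ, 1 ≤ n → ∀ x, Q^[n] f x = ∫ z, f z * gpdf (a ^ n * x) (w n) z := by
    intro n hn
    induction n, hn using Nat.le_induction with
    | base =>
      intro x
      rw [Function.iterate_one, hQ]
      simp only [pow_one, hw1]
      congr 1; ext y
      rw [hq' x y]
    | succ n hn ih =>
      intro x
      rw [Function.iterate_succ_apply', hQ]
      have : ∀ y, Q^[n] f y * q x y
          = (∫ z, f z * gpdf (a ^ n * y) (w n) z) * gpdf (a * x) (σ ^ 2) y := by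
        intro y; rw [ih y, hq' x y]
      rw [integral_congr_ae (Filter.Eventually.of_forall this)]
      rw [fubini_step f hfc Cf hfbd (a ^ n) (a * x) hσ2 (hwpos n hn)]
      congr 1; ext z
      rw [hwrec n]
      congr 2
      ring
  -- lipschitz bound
  have lip : ∀ p r : ℝ, |f p - f r| ≤ C' * |p - r| := by
    intro p r
    have := Convex.norm_image_sub_le_of_norm_hasDerivWithin_le
      (f := f) (f' := f') (s := Set.univ) (C := C')
      (fun x _ => (hderiv x).hasDerivWithinAt)
      (fun x _ => by rw [Real.norm_eq_abs]; exact hf'bd x)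
      convex_univ (Set.mem_univ r) (Set.mem_univ p)
    simpa [Real.norm_eq_abs] using this
  -- the two standardized integrals estimate
  have est : ∀ m s : ℝ, 0 ≤ s → s ≤ σa →
      |(∫ u, f (m + s * u) * gpdf 0 1 u) - ∫ u, f (σa * u) * gpdf 0 1 u|
        ≤ C' * (|m| + (σa - s)) := by
    intro m s hs0 hsle
    have hint1 : Integrable fun u => f (m + s * u) * gpdf 0 1 u :=
      bdd_mul_gpdf_integrable _ (hfc.comp (by fun_prop)) Cf (fun u => hfbd _) 0 zero_le_one
    have hint2 : Integrable fun u => f (σa * u) * gpdf 0 1 u :=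
      bdd_mul_gpdf_integrable _ (hfc.comp (by fun_prop)) Cf (fun u => hfbd _) 0 zero_le_one
    rw [← integral_sub hint1 hint2]
    have habs : |∫ u, f (m + s * u) * gpdf 0 1 u - f (σa * u) * gpdf 0 1 u|
        ≤ ∫ u, |f (m + s * u) * gpdf 0 1 u - f (σa * u) * gpdf 0 1 u| := by
      rw [← Real.norm_eq_abs]
      refine (norm_integral_le_integral_norm _).trans_eq ?_
      simp [Real.norm_eq_abs]
    refine habs.trans ?_
    have hptwise : ∀ u : ℝ, |f (m + s * u) * gpdf 0 1 u - f (σa * u) * gpdf 0 1 u|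
        ≤ (C' * |m|) * gpdf 0 1 u + (C' * (σa - s)) * (|u| * gpdf 0 1 u) := by
      intro u
      rw [← sub_mul, abs_mul, abs_of_nonneg (gpdf_nonneg _ _ _)]
      have h1 : |f (m + s * u) - f (σa * u)| ≤ C' * (|m| + (σa - s) * |u|) := by
        refine (lip _ _).trans ?_
        have : |m + s * u - σa * u| ≤ |m| + (σa - s) * |u| := by
          have h2 : m + s * u - σa * u = m + (s - σa) * u := by ring
          rw [h2]
          refine (abs_add_le _ _).trans ?_
          rw [abs_mul, abs_of_nonpos (show s - σa ≤ 0 by linarith)]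
          exact le_of_eq (by ring)
        nlinarith [abs_nonneg (m + s * u - σa * u)]
      have h2 := gpdf_nonneg 0 1 u
      nlinarith [abs_nonneg (f (m + s * u) - f (σa * u))]
    have hrhs : Integrable fun u => (C' * |m|) * gpdf 0 1 u + (C' * (σa - s)) * (|u| * gpdf 0 1 u) :=
      ((integrable_gpdf 0 zero_le_one).const_mul _).add (integrable_abs_gpdf.const_mul _)
    have hmono : ∫ u, |f (m + s * u) * gpdf 0 1 u - f (σa * u) * gpdf 0 1 u|
        ≤ ∫ u, ((C' * |m|) * gpdf 0 1 u + (C' * (σa - s)) * (|u| * gpdf 0 1 u)) :=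
      integral_mono (hint1.sub hint2).abs hrhs hptwise
    refine hmono.trans ?_
    rw [integral_add ((integrable_gpdf 0 zero_le_one).const_mul _)
      (integrable_abs_gpdf.const_mul _), integral_const_mul, integral_const_mul,
      integral_gpdf 0 zero_lt_one, mul_one]
    have h3 : C' * (σa - s) * ∫ u, |u| * gpdf 0 1 u ≤ C' * (σa - s) * 1 :=
      mul_le_mul_of_nonneg_left absmom_le_one (by nlinarith)
    nlinarith
  -- the invariant integral in standardized form
  have hmuint : ∫ y, f y * muD y = ∫ u, f (σa * u) * gpdf 0 1 u := by
    have h1 : ∫ y, f y * muD y = ∫ y, f y * gpdf 0 (σa ^ 2) y := by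
      congr 1; ext y; rw [hmu' y]
    rw [h1, standardize f 0 (by positivity)]
    congr 1; ext u
    rw [Real.sqrt_sq hσa0.le, zero_add]
  intro n x
  rcases Nat.eq_zero_or_pos n with hn | hn
  · -- n = 0
    subst hn
    simp only [Function.iterate_zero, id_eq, pow_zero, mul_one]
    have h0 : f x = ∫ u, f (x + 0 * u) * gpdf 0 1 u := by
      simp only [zero_mul, add_zero]
      rw [integral_const_mul, integral_gpdf 0 zero_lt_one, mul_one]
    rw [hmuint, h0]
    have h := est x 0 le_rfl hσa0.le
    refine h.trans ?_
    nlinarith [abs_nonneg x]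
  · -- n ≥ 1
    rw [rep n hn x, hmuint, standardize f (a ^ n * x) (hwpos n hn)]
    have h := est (a ^ n * x) (Real.sqrt (w n)) (Real.sqrt_nonneg _) ?hle
    case hle =>
      rw [hwval]
      rw [Real.sqrt_mul (by positivity), Real.sqrt_sq hσa0.le]
      calc σa * Real.sqrt (1 - a ^ (2 * n)) ≤ σa * 1 := by
            apply mul_le_mul_of_nonneg_left _ hσa0.le
            exact Real.sqrt_le_one.mpr (by nlinarith [pow_pos ha0 (2 * n)])
        _ = σa := mul_one _
    refine h.trans ?_
    have hsub : σa - Real.sqrt (w n) ≤ σa * a ^ n := by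
      rw [hwval, Real.sqrt_mul (by positivity), Real.sqrt_sq hσa0.le]
      have h5 : (1 : ℝ) - a ^ (2 * n) ≤ Real.sqrt (1 - a ^ (2 * n)) := by
        have h6 : 0 < 1 - a ^ (2 * n) := by
          have := pow_lt_one₀ ha0.le ha1 (show 2 * n ≠ 0 by omega)
          linarith
        rw [Real.le_sqrt' h6]
        nlinarith [mul_nonneg h6.le (pow_nonneg ha0.le (2 * n))]
      have h7 : σa - σa * Real.sqrt (1 - a ^ (2 * n)) ≤ σa * a ^ (2 * n) := by
        nlinarith [mul_le_mul_of_nonneg_left h5 hσa0.le]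
      have h8 : a ^ (2 * n) ≤ a ^ n := by
        rw [show 2 * n = n + n by ring, pow_add]
        nlinarith [pow_pos ha0 n, pow_le_one₀ (n := n) ha0.le ha1.le]
      linarith [h7, mul_le_mul_of_nonneg_left h8 hσa0.le]
    have habs : |a ^ n * x| = a ^ n * |x| := by
      rw [abs_mul, abs_of_pos (pow_pos ha0 n)]
    have hσan : σa * a ^ n ≤ σ * (1 - a)⁻¹ * a ^ n :=
      mul_le_mul_of_nonneg_right hσale (pow_nonneg ha0.le n)
    rw [habs, mul_assoc]
    apply mul_le_mul_of_nonneg_left _ hC'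
    rw [show (σ * (1 - a)⁻¹ + |x|) * a ^ n = σ * (1 - a)⁻¹ * a ^ n + a ^ n * |x| by ring]
    linarith [hsub, hσan]
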